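/- For any real α > 0, ∫_{ℝ²} ( 2α² |y|^{α-2} / (1+|y|^α)² ) · ( (1-|y|^α)/(1+|y|^α) ) · log|y| dy = -4π. -/

import Mathlib

open Real MeasureTheory Set Filter Topology

private lemma neglog_le (u : ℝ) (hu : 0 < u) : -Real.log u ≤ 2 * u ^ (-(1/2) : ℝ) := by
  have hs : 0 < u ^ (-(1/2) : ℝ) := Real.rpow_pos_of_pos hu _
  have h1 : Real.log (u ^ (-(1/2) : ℝ)) ≤ u ^ (-(1/2) : ℝ) - 1 :=
    Real.log_le_sub_one_of_pos hs
  rw [Real.log_rpow hu] at h1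
  linarith

private lemma log_le (u : ℝ) (hu : 0 < u) : Real.log u ≤ 2 * u ^ ((1/2) : ℝ) := by
  have hs : 0 < u ^ ((1/2) : ℝ) := Real.rpow_pos_of_pos hu _
  have h1 : Real.log (u ^ ((1/2) : ℝ)) ≤ u ^ ((1/2) : ℝ) - 1 :=
    Real.log_le_sub_one_of_pos hs
  rw [Real.log_rpow hu] at h1
  linarith

private lemma J_integrable :
    IntegrableOn (fun u : ℝ => (1 - u) * Real.log u / (1 + u) ^ 3) (Ioi 0) := by
  rw [show Ioi (0:ℝ) = Ioc 0 1 ∪ Ioi 1 from (Ioc_union_Ioi_eq_Ioi zero_le_one).symm]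
  have hmeas : ∀ s : Set ℝ, AEStronglyMeasurable (fun u : ℝ => (1 - u) * Real.log u / (1 + u) ^ 3)
      (volume.restrict s) := by
    intro s
    exact (((measurable_const.sub measurable_id).mul Real.measurable_log).div
      ((measurable_const.add measurable_id).pow_const 3)).aestronglyMeasurable
  apply IntegrableOn.union
  · -- on (0, 1], bounded by 2 * u ^ (-1/2)
    have hint : IntegrableOn (fun u : ℝ => 2 * u ^ (-(1/2) : ℝ)) (Ioc 0 1) := by
      have := intervalIntegral.intervalIntegrable_rpow' (a := 0) (b := 1) (r := -(1/2)) (by norm_num)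
      rw [intervalIntegrable_iff_integrableOn_Ioc_of_le zero_le_one] at this
      exact this.const_mul 2
    refine Integrable.mono hint (hmeas _) ?_
    filter_upwards [ae_restrict_mem measurableSet_Ioc] with u hu
    obtain ⟨hu0, hu1⟩ := hu
    have hd : (1:ℝ) ≤ (1 + u) ^ 3 := one_le_pow₀ (by linarith)
    have hb : |(1 - u) * Real.log u| ≤ 2 * u ^ (-(1/2) : ℝ) := by
      rw [abs_mul]
      have h1 : |1 - u| ≤ 1 := by rw [abs_le]; constructor <;> linarith
      have h2 : |Real.log u| = -Real.log u := by
        rw [abs_of_nonpos (Real.log_nonpos hu0.le hu1)]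
      calc |1 - u| * |Real.log u| ≤ 1 * |Real.log u| := by
            apply mul_le_mul_of_nonneg_right h1 (abs_nonneg _)
        _ = -Real.log u := by rw [one_mul, h2]
        _ ≤ 2 * u ^ (-(1/2) : ℝ) := neglog_le u hu0
    rw [Real.norm_eq_abs, Real.norm_eq_abs, abs_div, abs_of_nonneg (by positivity : (0:ℝ) ≤ (1+u)^3),
      abs_of_nonneg (by positivity : (0:ℝ) ≤ 2 * u ^ (-(1/2) : ℝ))]
    calc |(1 - u) * Real.log u| / (1 + u) ^ 3 ≤ |(1 - u) * Real.log u| / 1 :=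
          div_le_div_of_nonneg_left (abs_nonneg _) one_pos hd
      _ ≤ 2 * u ^ (-(1/2) : ℝ) := by rw [div_one]; exact hb
  · -- on (1, ∞), bounded by 2 * u ^ (-3/2)
    have hint : IntegrableOn (fun u : ℝ => 2 * u ^ (-(3/2) : ℝ)) (Ioi 1) :=
      (integrableOn_Ioi_rpow_of_lt (by norm_num) one_pos).const_mul 2
    refine Integrable.mono hint (hmeas _) ?_
    filter_upwards [ae_restrict_mem measurableSet_Ioi] with u hu
    have hu1 : (1:ℝ) < u := hu
    have hu0 : (0:ℝ) < u := by linarith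
    have hlog : 0 ≤ Real.log u := Real.log_nonneg hu1.le
    have hcube : u ^ (3:ℝ) ≤ (1 + u) ^ 3 := by
      rw [show (3:ℝ) = ((3:ℕ):ℝ) by norm_num, Real.rpow_natCast]
      exact pow_le_pow_left₀ hu0.le (by linarith) 3
    have hnum : |(1 - u) * Real.log u| ≤ u * (2 * u ^ ((1/2) : ℝ)) := by
      rw [abs_mul, abs_of_nonneg hlog, abs_of_nonpos (by linarith : 1 - u ≤ 0)]
      have h1 : -(1 - u) ≤ u := by linarith
      calc -(1 - u) * Real.log u ≤ u * Real.log u :=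
            mul_le_mul_of_nonneg_right h1 hlog
        _ ≤ u * (2 * u ^ ((1/2) : ℝ)) :=
            mul_le_mul_of_nonneg_left (log_le u hu0) hu0.le
    have key : u * (2 * u ^ ((1/2) : ℝ)) / u ^ (3:ℝ) = 2 * u ^ (-(3/2) : ℝ) := by
      rw [show u * (2 * u ^ ((1/2):ℝ)) = 2 * (u ^ (1:ℝ) * u ^ ((1/2):ℝ)) by
        rw [Real.rpow_one]; ring, ← Real.rpow_add hu0, mul_div_assoc, ← Real.rpow_sub hu0]
      norm_num
    rw [Real.norm_eq_abs, Real.norm_eq_abs, abs_div,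
      abs_of_nonneg (by positivity : (0:ℝ) ≤ (1+u)^3),
      abs_of_nonneg (by positivity : (0:ℝ) ≤ 2 * u ^ (-(3/2) : ℝ)), ← key]
    exact div_le_div₀ (by positivity) hnum (by positivity) hcube

private lemma J_value :
    ∫ u in Ioi (0:ℝ), (1 - u) * Real.log u / (1 + u) ^ 3 = -1 := by
  have hcont : ContinuousWithinAt
      (fun u : ℝ => u * Real.log u / (1 + u) ^ 2 + (1 + u)⁻¹) (Ici 0) 0 := by
    apply ContinuousAt.continuousWithinAt
    apply ContinuousAt.add
    · exact (Real.continuous_mul_log.continuousAt).div (by fun_prop) (by norm_num)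
    · exact ContinuousAt.inv₀ (by fun_prop) (by norm_num)
  have hderiv : ∀ x ∈ Ioi (0:ℝ), HasDerivAt
      (fun u : ℝ => u * Real.log u / (1 + u) ^ 2 + (1 + u)⁻¹)
      ((1 - x) * Real.log x / (1 + x) ^ 3) x := by
    intro x hx
    have hx0 : (0:ℝ) < x := hx
    have hx1 : (0:ℝ) < 1 + x := by linarith
    have h1 : HasDerivAt (fun u : ℝ => u * Real.log u) (Real.log x + 1) x :=
      Real.hasDerivAt_mul_log hx0.ne'
    have h2 : HasDerivAt (fun u : ℝ => (1 + u) ^ 2) (2 * (1 + x)) x := by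
      have := (((hasDerivAt_id x).const_add 1).pow 2)
      simpa [Pi.pow_def] using this
    have h3 := h1.div h2 (by positivity)
    have h2' : HasDerivAt (fun u : ℝ => 1 + u) 1 x := (hasDerivAt_id x).const_add 1
    have h4 := h2'.inv hx1.ne'
    convert (show HasDerivAt (fun u : ℝ => u * Real.log u / (1 + u) ^ 2 + (1 + u)⁻¹) _ x from h3.add h4) using 1
    field_simp [hx1.ne']
    ring
  have htend : Tendsto (fun u : ℝ => u * Real.log u / (1 + u) ^ 2 + (1 + u)⁻¹)
      atTop (𝓝 0) := by
    have t2 : Tendsto (fun u : ℝ => (1 + u)⁻¹) atTop (𝓝 0) :=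
      tendsto_inv_atTop_zero.comp (tendsto_atTop_add_const_left _ 1 tendsto_id)
    have t1 : Tendsto (fun u : ℝ => u * Real.log u / (1 + u) ^ 2) atTop (𝓝 0) := by
      have hlim : Tendsto (fun x : ℝ => Real.log x / x) atTop (𝓝 0) := by
        have := Real.tendsto_pow_log_div_mul_add_atTop 1 0 1 one_ne_zero
        simpa using this
      apply squeeze_zero' (g := fun u : ℝ => Real.log u / u) _ _ hlim
      · filter_upwards [eventually_ge_atTop (1:ℝ)] with u hu
        have : 0 ≤ Real.log u := Real.log_nonneg hu
        positivity
      · filter_upwards [eventually_ge_atTop (1:ℝ)] with u hu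
        have hu0 : (0:ℝ) < u := by linarith
        rw [div_le_div_iff₀ (by positivity) hu0]
        have : 0 ≤ Real.log u := Real.log_nonneg hu
        nlinarith
    simpa using t1.add t2
  have := integral_Ioi_of_hasDerivAt_of_tendsto hcont hderiv J_integrable htend
  simpa using this

theorem stmt4 (α : ℝ) (hα : 0 < α) :
    ∫ y : EuclideanSpace ℝ (Fin 2),
      (2 * α ^ 2 * ‖y‖ ^ (α - 2) / (1 + ‖y‖ ^ α) ^ 2) *
        ((1 - ‖y‖ ^ α) / (1 + ‖y‖ ^ α)) * Real.log ‖y‖ = -(4 * π) := by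
  have h2d := MeasureTheory.integral_fun_norm_addHaar
    (volume : Measure (EuclideanSpace ℝ (Fin 2)))
    (fun r : ℝ => (2 * α ^ 2 * r ^ (α - 2) / (1 + r ^ α) ^ 2) *
      ((1 - r ^ α) / (1 + r ^ α)) * Real.log r)
  rw [h2d]
  have hdim : Module.finrank ℝ (EuclideanSpace ℝ (Fin 2)) = 2 := by
    simp [finrank_euclideanSpace]
  rw [hdim]
  have hball : volume.real (Metric.ball (0 : EuclideanSpace ℝ (Fin 2)) 1) = π := by
    rw [measureReal_def, EuclideanSpace.volume_ball]
    rw [show ((Fintype.card (Fin 2) : ℝ) / 2 + 1) = 2 by simp; norm_num]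
    simp [Real.Gamma_two, Real.sq_sqrt Real.pi_nonneg, Real.pi_nonneg]
  rw [hball]
  have h1d : ∫ r in Ioi (0:ℝ), r ^ (2 - 1 : ℕ) •
      ((2 * α ^ 2 * r ^ (α - 2) / (1 + r ^ α) ^ 2) *
        ((1 - r ^ α) / (1 + r ^ α)) * Real.log r) = -2 := by
    have hsub : ∫ r in Ioi (0:ℝ), r ^ (2 - 1 : ℕ) •
        ((2 * α ^ 2 * r ^ (α - 2) / (1 + r ^ α) ^ 2) *
          ((1 - r ^ α) / (1 + r ^ α)) * Real.log r)
        = ∫ u in Ioi (0:ℝ), 2 * ((1 - u) * Real.log u / (1 + u) ^ 3) := by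
      rw [← integral_comp_rpow_Ioi
        (fun u : ℝ => 2 * ((1 - u) * Real.log u / (1 + u) ^ 3)) hα.ne']
      apply setIntegral_congr_fun measurableSet_Ioi
      intro r hr
      have hr0 : (0:ℝ) < r := hr
      have hpos : (0:ℝ) < 1 + r ^ α := by positivity
      have hrr : r ^ (α - 1) = r * r ^ (α - 2) := by
        rw [show α - 1 = 1 + (α - 2) by ring, Real.rpow_add hr0, Real.rpow_one]
      simp only [smul_eq_mul, pow_one, Real.log_rpow hr0, abs_of_pos hα, hrr]
      field_simp
      ring
    rw [hsub, MeasureTheory.integral_const_mul, J_value]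
    norm_num
  rw [h1d]
  simp
  ring
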